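/- Let A ∈ R^{c×e} be a matrix of full row rank c (with c ≤ e), let D: R^e → R^e be a continuous strictly monotone map of the form D(q)_i = r_i · q_i · |q_i|^{x−1} with r_i > 0 and x > 1, and let b ∈ R^e, d ∈ R^c be given. Then there exists exactly one pair (h, q) ∈ R^c × R^e satisfying Aᵀ h = D(q) + b and A q = d. -/

import Mathlib

open Matrix Real Filter

lemma hd_abs_rpow {x : ℝ} (hx : 1 < x) (s : ℝ) :
    HasDerivAt (fun t : ℝ => |t| ^ (x + 1)) ((x + 1) * (s * |s| ^ (x - 1))) s := by
  rcases eq_or_ne s 0 with rfl | hs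
  · have h0 : (x + 1) * ((0:ℝ) * |(0:ℝ)| ^ (x - 1)) = 0 := by ring
    rw [h0, hasDerivAt_iff_tendsto_slope]
    have habs : Tendsto (fun t : ℝ => |t| ^ x) (nhdsWithin 0 {(0:ℝ)}ᶜ) (nhds 0) := by
      have hc : ContinuousAt (fun t : ℝ => |t| ^ x) 0 := by
        exact (Real.continuousAt_rpow_const (|(0:ℝ)|) x (Or.inr (by linarith))).comp
          continuous_abs.continuousAt
      have h00 : |(0:ℝ)| ^ x = 0 := by
        rw [abs_zero, Real.zero_rpow (by linarith : x ≠ 0)]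
      have := hc.tendsto.mono_left (nhdsWithin_le_nhds (s := {(0:ℝ)}ᶜ))
      rwa [h00] at this
    apply squeeze_zero_norm' _ habs
    filter_upwards [self_mem_nhdsWithin] with t ht
    have ht0 : t ≠ 0 := ht
    have habs0 : (0:ℝ) < |t| := abs_pos.mpr ht0
    have hsl : slope (fun t : ℝ => |t| ^ (x + 1)) 0 t = |t| ^ (x + 1) / t := by
      rw [slope_def_field]
      rw [abs_zero, Real.zero_rpow (by linarith : x + 1 ≠ 0), sub_zero, sub_zero]
    rw [hsl, Real.norm_eq_abs, abs_div, abs_of_nonneg (Real.rpow_nonneg (abs_nonneg t) _)]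
    rw [Real.rpow_add habs0, Real.rpow_one, mul_div_assoc, div_self (ne_of_gt habs0), mul_one]
  · have habs : HasDerivAt (fun t : ℝ => |t|) ((SignType.sign s : ℝ)) s := hasDerivAt_abs hs
    have hpow : HasDerivAt (fun y : ℝ => y ^ (x + 1)) ((x + 1) * |s| ^ (x + 1 - 1)) |s| :=
      Real.hasDerivAt_rpow_const (Or.inl (abs_ne_zero.mpr hs))
    have := hpow.comp s habs
    refine this.congr_deriv (Eq.symm ?_)
    have h1 : x + 1 - 1 = x := by ring
    have h2 : |s| ^ x = |s| * |s| ^ (x - 1) := by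
      have : |s| ^ x = |s| ^ (1 + (x - 1)) := by norm_num
      rw [this, Real.rpow_add (abs_pos.mpr hs), Real.rpow_one]
    have h3 : (SignType.sign s : ℝ) * |s| = s := sign_mul_abs s
    rw [h1, h2]
    calc (x + 1) * (s * |s| ^ (x - 1))
        = (x+1) * (((SignType.sign s : ℝ) * |s|) * |s| ^ (x-1)) := by rw [h3]
      _ = (x + 1) * (|s| * |s| ^ (x - 1)) * (SignType.sign s : ℝ) := by ring

lemma sm_aux {y : ℝ} (hy : 0 < y) : StrictMono (fun t : ℝ => t * |t| ^ y) := by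
  have key : ∀ a b : ℝ, 0 ≤ a → a < b → a * |a| ^ y < b * |b| ^ y := by
    intro a b ha hab
    have hb : 0 < b := lt_of_le_of_lt ha hab
    rw [abs_of_nonneg ha, abs_of_pos hb]
    rcases eq_or_lt_of_le ha with rfl | ha'
    · simpa using mul_pos hb (Real.rpow_pos_of_pos hb y)
    · calc a * a ^ y < b * a ^ y :=
            mul_lt_mul_of_pos_right hab (Real.rpow_pos_of_pos ha' y)
      _ ≤ b * b ^ y :=
            mul_le_mul_of_nonneg_left (Real.rpow_le_rpow ha hab.le hy.le) hb.le
  intro a b hab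
  show a * |a| ^ y < b * |b| ^ y
  rcases le_or_gt 0 a with ha | ha
  · exact key a b ha hab
  · rcases le_or_gt b 0 with hb | hb
    · have := key (-b) (-a) (by linarith) (by linarith)
      rw [abs_neg, abs_neg] at this
      nlinarith [this]
    · have h1 : a * |a| ^ y < 0 := mul_neg_of_neg_of_pos ha (Real.rpow_pos_of_pos (abs_pos.mpr (ne_of_lt ha)) y)
      have h2 : 0 < b * |b| ^ y := mul_pos hb (Real.rpow_pos_of_pos (abs_pos.mpr (ne_of_gt hb)) y)
      linarith

lemma surj_mulVec {c e : ℕ} (A : Matrix (Fin c) (Fin e) ℝ) (hA : A.rank = c) :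
    Function.Surjective A.mulVec := by
  have hrange : LinearMap.range A.mulVecLin = ⊤ := by
    apply Submodule.eq_top_of_finrank_eq
    have h1 : Module.finrank ℝ (LinearMap.range A.mulVecLin) = A.rank := rfl
    rw [h1, hA, Module.finrank_fin_fun]
  intro d
  obtain ⟨q, hq⟩ := LinearMap.range_eq_top.mp hrange d
  exact ⟨q, hq⟩

lemma inj_mulVecT {c e : ℕ} (A : Matrix (Fin c) (Fin e) ℝ) (hA : A.rank = c) :
    Function.Injective Aᵀ.mulVec := by
  have hrk : Aᵀ.rank = c := by rw [Matrix.rank_transpose]; exact hA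
  have hrn := LinearMap.finrank_range_add_finrank_ker Aᵀ.mulVecLin
  have h1 : Module.finrank ℝ (LinearMap.range Aᵀ.mulVecLin) = c := hrk
  rw [h1, Module.finrank_fin_fun] at hrn
  have hker : Module.finrank ℝ (LinearMap.ker Aᵀ.mulVecLin) = 0 := by omega
  have hbot : LinearMap.ker Aᵀ.mulVecLin = ⊥ := Submodule.finrank_eq_zero.mp hker
  have := LinearMap.ker_eq_bot.mp hbot
  intro u v huv
  exact this huv

lemma mem_range_transpose {c e : ℕ} (A : Matrix (Fin c) (Fin e) ℝ) (hA : A.rank = c)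
    (w : Fin e → ℝ) (hw : ∀ v, A.mulVec v = 0 → w ⬝ᵥ v = 0) :
    ∃ h, Aᵀ.mulVec h = w := by
  have hinj := inj_mulVecT A hA
  have hMinj : Function.Injective (A * Aᵀ).mulVecLin := by
    rw [← LinearMap.ker_eq_bot, LinearMap.ker_eq_bot']
    intro z hz
    simp only [Matrix.mulVecLin_apply] at hz
    have h1 : Aᵀ.mulVec z ⬝ᵥ Aᵀ.mulVec z = 0 := by
      nth_rewrite 1 [Matrix.mulVec_transpose]
      rw [← Matrix.dotProduct_mulVec, Matrix.mulVec_mulVec, hz, dotProduct_zero]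
    have h2 : Aᵀ.mulVec z = 0 := dotProduct_self_eq_zero.mp h1
    apply hinj
    rw [h2, Matrix.mulVec_zero]
  have hMsurj : Function.Surjective (A * Aᵀ).mulVecLin :=
    LinearMap.injective_iff_surjective.mp hMinj
  obtain ⟨u, hu⟩ := hMsurj (A.mulVec w)
  simp only [Matrix.mulVecLin_apply] at hu
  set v := w - Aᵀ.mulVec u with hv
  have hAv : A.mulVec v = 0 := by
    rw [hv, Matrix.mulVec_sub, Matrix.mulVec_mulVec, hu]
    simp
  have h3 : w ⬝ᵥ v = 0 := hw v hAv
  have h4 : Aᵀ.mulVec u ⬝ᵥ v = 0 := by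
    rw [dotProduct_comm, Matrix.dotProduct_mulVec, Matrix.vecMul_transpose, hAv,
      zero_dotProduct]
  have h5 : v ⬝ᵥ v = 0 := by
    rw [hv]
    rw [sub_dotProduct]
    rw [← hv, h3, h4, sub_zero]
  have h6 : v = 0 := dotProduct_self_eq_zero.mp h5
  exact ⟨u, by rw [eq_comm, ← sub_eq_zero]; exact h6⟩

set_option maxHeartbeats 1600000 in
/-- If `A ∈ ℝ^{c×e}` has full row rank `c ≤ e` and `D` is the
Hazen-Williams nonlinearity `D(q)_i = r_i q_i |q_i|^(x-1)` (`r_i > 0`, `x > 1`), then for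
any `b ∈ ℝ^e`, `d ∈ ℝ^c` there is exactly one pair `(h, q)` with
`Aᵀ h = D(q) + b` and `A q = d`. -/
theorem unique_hydraulic_state_abstract
    (c e : ℕ) (hce : c ≤ e) (A : Matrix (Fin c) (Fin e) ℝ) (hA : A.rank = c)
    (r : Fin e → ℝ) (hr : ∀ i, 0 < r i) (x : ℝ) (hx : 1 < x)
    (D : (Fin e → ℝ) → (Fin e → ℝ))
    (hD : ∀ q i, D q i = r i * q i * |q i| ^ (x - 1))
    (b : Fin e → ℝ) (d : Fin c → ℝ) :
    ∃! p : (Fin c → ℝ) × (Fin e → ℝ),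
      Aᵀ.mulVec p.1 = D p.2 + b ∧ A.mulVec p.2 = d := by
  have hx1 : (0:ℝ) < x - 1 := by linarith
  have hx0 : (0:ℝ) < x := by linarith
  have hxp1 : (0:ℝ) < x + 1 := by linarith
  set Φ : (Fin e → ℝ) → ℝ :=
    fun q => ∑ i, (r i / (x + 1) * |q i| ^ (x + 1) + b i * q i) with hΦ
  have hΦc : Continuous Φ := by
    apply continuous_finset_sum
    intro i _
    have h1 : Continuous fun q : Fin e → ℝ => |q i| ^ (x + 1) :=
      (continuous_abs.comp (continuous_apply i)).rpow_const (fun q => Or.inr (by linarith))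
    exact (continuous_const.mul h1).add (continuous_const.mul (continuous_apply i))
  obtain ⟨q0, hq0⟩ := surj_mulVec A hA d
  set β : ℝ := 1 + ∑ j, |b j| with hβdef
  have hsb : (0:ℝ) ≤ ∑ j, |b j| := Finset.sum_nonneg fun j _ => abs_nonneg _
  have hβ1 : 1 ≤ β := by simp only [hβdef]; linarith
  have hβpos : (0:ℝ) < β := by linarith
  have hbβ : ∀ i, |b i| ≤ β := by
    intro i
    have := Finset.single_le_sum (f := fun j => |b j|) (fun j _ => abs_nonneg _)
      (Finset.mem_univ i)
    simp only [hβdef]; linarith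
  set T : Fin e → ℝ := fun i => max 1 ((2 * β / (r i / (x + 1))) ^ x⁻¹) with hTdef
  have hT1 : ∀ i, 1 ≤ T i := fun i => le_max_left _ _
  have hTpow : ∀ i, 2 * β ≤ r i / (x + 1) * T i ^ x := by
    intro i
    have hc : 0 < r i / (x + 1) := div_pos (hr i) hxp1
    have hbase : 0 ≤ 2 * β / (r i / (x + 1)) := by positivity
    have h1 : (2 * β / (r i / (x + 1))) ^ x⁻¹ ≤ T i := le_max_right _ _
    have h2 : 2 * β / (r i / (x + 1)) ≤ T i ^ x := by
      rw [← Real.rpow_inv_rpow hbase (ne_of_gt hx0)]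
      exact Real.rpow_le_rpow (Real.rpow_nonneg hbase _) h1 hx0.le
    have hrne : r i ≠ 0 := ne_of_gt (hr i)
    have hxne : x + 1 ≠ 0 := ne_of_gt hxp1
    calc 2 * β = r i / (x + 1) * (2 * β / (r i / (x + 1))) := by field_simp
      _ ≤ r i / (x + 1) * T i ^ x := mul_le_mul_of_nonneg_left h2 hc.le
  have key : ∀ (i : Fin e) (t : ℝ),
      β * |t| - 2 * β * T i ≤ r i / (x + 1) * |t| ^ (x + 1) + b i * t := by
    intro i t
    have hb1 : -(β * |t|) ≤ b i * t := by
      have h1 : |b i * t| = |b i| * |t| := abs_mul _ _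
      have h2 : -(|b i * t|) ≤ b i * t := neg_abs_le _
      have h3 : |b i| * |t| ≤ β * |t| := mul_le_mul_of_nonneg_right (hbβ i) (abs_nonneg t)
      linarith
    have hnn : 0 ≤ r i / (x + 1) * |t| ^ (x + 1) :=
      mul_nonneg (le_of_lt (div_pos (hr i) hxp1)) (Real.rpow_nonneg (abs_nonneg t) _)
    rcases le_or_gt (|t|) (T i) with hcase | hcase
    · have hfact : β * |t| ≤ β * T i := mul_le_mul_of_nonneg_left hcase hβpos.le
      calc β * |t| - 2 * β * T i ≤ β * |t| - 2 * (β * |t|) := by linarith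
        _ = -(β * |t|) := by ring
        _ ≤ b i * t := hb1
        _ ≤ r i / (x + 1) * |t| ^ (x + 1) + b i * t := by linarith
    · have ht1 : (1:ℝ) < |t| := lt_of_le_of_lt (hT1 i) hcase
      have htpos : (0:ℝ) < |t| := by linarith
      have h1 : |t| ^ (x + 1) = |t| ^ x * |t| := by
        rw [Real.rpow_add htpos, Real.rpow_one]
      have h2 : T i ^ x ≤ |t| ^ x :=
        Real.rpow_le_rpow (by linarith [hT1 i]) hcase.le hx0.le
      have h3 : 2 * β * |t| ≤ r i / (x + 1) * |t| ^ (x + 1) := by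
        rw [h1, ← mul_assoc]
        have h4 : 2 * β ≤ r i / (x + 1) * |t| ^ x :=
          le_trans (hTpow i) (mul_le_mul_of_nonneg_left h2 (le_of_lt (div_pos (hr i) hxp1)))
        exact mul_le_mul_of_nonneg_right h4 (abs_nonneg t)
      have h5 : 0 < 2 * β * T i := by
        have := hT1 i; nlinarith
      nlinarith
  set C : ℝ := ∑ j, 2 * β * T j with hCdef
  have hC0 : 0 ≤ C := Finset.sum_nonneg fun j _ => by nlinarith [hT1 j]
  have hlow : ∀ (q : Fin e → ℝ) (i : Fin e), β * |q i| - C ≤ Φ q := by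
    intro q i
    have h1 : ∑ j, (β * |q j| - 2 * β * T j) ≤ Φ q :=
      Finset.sum_le_sum fun j _ => key j (q j)
    rw [Finset.sum_sub_distrib] at h1
    have h2 : β * |q i| ≤ ∑ j, β * |q j| :=
      Finset.single_le_sum (f := fun j => β * |q j|)
        (fun j _ => by positivity) (Finset.mem_univ i)
    simp only [hCdef]
    linarith
  set R : ℝ := (∑ j, |q0 j|) + |Φ q0| + C + 1 with hRdef
  have hs0 : (0:ℝ) ≤ ∑ j, |q0 j| := Finset.sum_nonneg fun j _ => abs_nonneg _
  have hR0 : (0:ℝ) ≤ R := by simp only [hRdef]; linarith [abs_nonneg (Φ q0)]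
  set K : Set (Fin e → ℝ) :=
    {q | A.mulVec q = d} ∩ Set.pi Set.univ (fun _ => Set.Icc (-R) R) with hKdef
  have hcont : Continuous fun q : Fin e → ℝ => A.mulVec q :=
    A.mulVecLin.continuous_of_finiteDimensional
  have hclosed : IsClosed {q : Fin e → ℝ | A.mulVec q = d} :=
    isClosed_singleton.preimage hcont
  have hKc : IsCompact K :=
    (isCompact_univ_pi fun _ => isCompact_Icc).inter_left hclosed
  have hq0K : q0 ∈ K := by
    refine ⟨hq0, fun i _ => ?_⟩
    have h1 : |q0 i| ≤ ∑ j, |q0 j| :=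
      Finset.single_le_sum (f := fun j => |q0 j|) (fun j _ => abs_nonneg _)
        (Finset.mem_univ i)
    have h2 : |q0 i| ≤ R := by simp only [hRdef]; linarith [abs_nonneg (Φ q0)]
    exact Set.mem_Icc.mpr (abs_le.mp h2)
  obtain ⟨qm, hqmK, hqmmin⟩ := hKc.exists_isMinOn ⟨q0, hq0K⟩ hΦc.continuousOn
  have hqmS : A.mulVec qm = d := hqmK.1
  have hglob : ∀ q', A.mulVec q' = d → Φ qm ≤ Φ q' := by
    intro q' hq'
    by_cases hcase : ∀ i, |q' i| ≤ R
    · exact isMinOn_iff.mp hqmmin q' ⟨hq', fun i _ => Set.mem_Icc.mpr (abs_le.mp (hcase i))⟩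
    · push_neg at hcase
      obtain ⟨i, hi⟩ := hcase
      have h1 : Φ qm ≤ Φ q0 := isMinOn_iff.mp hqmmin q0 hq0K
      have h2 : β * |q' i| - C ≤ Φ q' := hlow q' i
      have h3 : R ≤ β * R := le_mul_of_one_le_left hR0 hβ1
      have h4 : Φ q0 ≤ |Φ q0| := le_abs_self _
      have h5 : β * R < β * |q' i| := by
        exact mul_lt_mul_of_pos_left hi hβpos
      simp only [hRdef] at h3 h5 ⊢
      linarith
  set w : Fin e → ℝ := fun i => r i * qm i * |qm i| ^ (x - 1) + b i with hwdef
  have horth : ∀ v, A.mulVec v = 0 → w ⬝ᵥ v = 0 := by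
    intro v hv
    set ψ : ℝ → ℝ := fun t => Φ (qm + t • v) with hψ
    have hmem : ∀ t : ℝ, A.mulVec (qm + t • v) = d := by
      intro t
      rw [Matrix.mulVec_add, Matrix.mulVec_smul, hv, hqmS]
      simp
    have hlocmin : IsLocalMin ψ 0 := by
      apply Filter.Eventually.of_forall
      intro t
      have h0 : ψ 0 = Φ qm := by simp [hψ]
      rw [h0]
      exact hglob _ (hmem t)
    have hder : HasDerivAt ψ (w ⬝ᵥ v) 0 := by
      have hterm : ∀ i : Fin e, HasDerivAt
          (fun t : ℝ => r i / (x + 1) * |qm i + t * v i| ^ (x + 1) + b i * (qm i + t * v i))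
          (w i * v i) 0 := by
        intro i
        have hin : HasDerivAt (fun t : ℝ => qm i + t * v i) (v i) 0 := by
          simpa using (hasDerivAt_mul_const (v i)).const_add (qm i)
        have hout : HasDerivAt (fun s : ℝ => r i / (x + 1) * |s| ^ (x + 1) + b i * s)
            (r i * qm i * |qm i| ^ (x - 1) + b i) (qm i) := by
          have h1 := (hd_abs_rpow hx (qm i)).const_mul (r i / (x + 1))
          have h2 : HasDerivAt (fun s : ℝ => b i * s) (b i) (qm i) := by
            simpa using (hasDerivAt_id (qm i)).const_mul (b i)
          have h3 := h1.add h2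
          refine h3.congr_deriv (Eq.symm ?_)
          field_simp
        have hout2 : HasDerivAt (fun s : ℝ => r i / (x + 1) * |s| ^ (x + 1) + b i * s)
            (r i * qm i * |qm i| ^ (x - 1) + b i) (qm i + 0 * v i) := by
          rw [show qm i + 0 * v i = qm i by ring]
          exact hout
        exact hout2.comp 0 hin
      have hψeq : ψ = fun t : ℝ =>
          ∑ i, (r i / (x + 1) * |qm i + t * v i| ^ (x + 1) + b i * (qm i + t * v i)) := by
        funext t
        simp [hψ, hΦ, Pi.add_apply, Pi.smul_apply, smul_eq_mul]
      rw [hψeq]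
      have hsum := HasDerivAt.fun_sum (u := Finset.univ) (fun i _ => hterm i)
      exact hsum
    exact hlocmin.hasDerivAt_eq_zero hder
  obtain ⟨h, hh⟩ := mem_range_transpose A hA w horth
  have hw : w = D qm + b := by
    funext i
    rw [Pi.add_apply, hD]
  refine ⟨(h, qm), ⟨by rw [hh, hw], hqmS⟩, ?_⟩
  rintro ⟨h2, q2⟩ ⟨hh2, hq2⟩
  have hdq : ∀ (u : Fin c → ℝ) (z : Fin e → ℝ),
      (Aᵀ.mulVec u) ⬝ᵥ z = u ⬝ᵥ (A.mulVec z) := by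
    intro u z
    rw [Matrix.mulVec_transpose, ← Matrix.dotProduct_mulVec]
  have hker : A.mulVec (q2 - qm) = 0 := by
    rw [Matrix.mulVec_sub, hq2, hqmS, sub_self]
  have hzero : (D q2 - D qm) ⬝ᵥ (q2 - qm) = 0 := by
    have e1 : D q2 - D qm = Aᵀ.mulVec (h2 - h) := by
      rw [Matrix.mulVec_sub, hh2, hh, hw]
      abel
    rw [e1, hdq, hker, dotProduct_zero]
  have hstr : ∀ (i : Fin e) (a cc : ℝ), a ≠ cc →
      0 < (r i * a * |a| ^ (x - 1) - r i * cc * |cc| ^ (x - 1)) * (a - cc) := by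
    intro i a cc hac
    rcases hac.lt_or_gt with hlt | hlt
    · have h1 : a * |a| ^ (x - 1) < cc * |cc| ^ (x - 1) := sm_aux hx1 hlt
      have h2 : r i * (a * |a| ^ (x - 1)) < r i * (cc * |cc| ^ (x - 1)) :=
        mul_lt_mul_of_pos_left h1 (hr i)
      nlinarith
    · have h1 : cc * |cc| ^ (x - 1) < a * |a| ^ (x - 1) := sm_aux hx1 hlt
      have h2 : r i * (cc * |cc| ^ (x - 1)) < r i * (a * |a| ^ (x - 1)) :=
        mul_lt_mul_of_pos_left h1 (hr i)
      nlinarith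
  have hterm0 : ∀ i : Fin e, 0 ≤ (D q2 i - D qm i) * (q2 i - qm i) := by
    intro i
    rcases eq_or_ne (q2 i) (qm i) with heq | hne
    · rw [hD, hD, heq, sub_self, zero_mul]
    · have := hstr i (q2 i) (qm i) hne
      rw [hD, hD]
      linarith
  have hsum0 : ∑ i, (D q2 i - D qm i) * (q2 i - qm i) = 0 := by
    rw [← hzero]
    simp [dotProduct, Pi.sub_apply]
  have hqeq : q2 = qm := by
    funext i
    by_contra hne
    have h1 := hstr i (q2 i) (qm i) hne
    have h2 := (Finset.sum_eq_zero_iff_of_nonneg (fun i _ => hterm0 i)).mp hsum0 i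
      (Finset.mem_univ i)
    rw [hD, hD] at h2
    linarith
  have hheq : h2 = h := by
    apply inj_mulVecT A hA
    rw [hh2, hh, hw, hqeq]
  rw [Prod.mk.injEq]
  exact ⟨hheq, hqeq⟩
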